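/- Fix K > 1 and a smooth function φ:[0,∞)→[0,1] with 𝟙_{[0,K]} ≤ φ ≤ 𝟙_{[0,2K]} and |φ′| ≤ 𝟙_{[0,2K]}. There exists a constant C < ∞, depending only on K and φ, such that for all W ≥ 1, all A ∈ Mat_W(ℂ), all Hermitian W×W matrices G, G̃, and all real z with |z| ≤ √W: ‖A‖_HS · ‖Q_A‖_HS ≤ C·W, where, writing γ := φ(‖G‖²_HS/W²)·φ(‖G̃‖²_HS/W²), f(A) := ‖A‖²_HS and g(A) := ‖G + z·1 + A·G̃·A*‖²_HS, Q_A := γ·φ′(f(A)/W)·φ(g(A)/W²)·(2/W)·A + γ·φ(f(A)/W)·φ′(g(A)/W²)·(4/W²)·( (G + z·1)·A·G̃ + A·G̃·A*·A·G̃ ). -/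

import Mathlib

open Matrix

noncomputable section

namespace RBM

abbrev Mat (W : ℕ) := Matrix (Fin W) (Fin W) ℂ

/-- Squared Hilbert–Schmidt norm `‖M‖²_HS = tr(M*M)`. -/
def hsSq {W : ℕ} (M : Mat W) : ℝ := (Matrix.trace (Mᴴ * M)).re

attribute [local instance] Matrix.frobeniusSeminormedAddCommGroup
  Matrix.frobeniusNormedAddCommGroup Matrix.frobeniusNormedSpace
  Matrix.frobeniusNormedRing Matrix.frobeniusNormedAlgebra

lemma hsSq_eq {W : ℕ} (M : Mat W) : hsSq M = ‖M‖ ^ 2 := by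
  have h1 : ‖M‖ ^ 2 = ∑ i, ∑ j, ‖M i j‖ ^ 2 := by
    rw [Matrix.frobenius_norm_def, ← Real.rpow_natCast _ 2, ← Real.rpow_mul (by positivity)]
    norm_num
  rw [h1]
  simp only [hsSq, Matrix.trace, Matrix.diag, Matrix.mul_apply, Matrix.conjTranspose_apply,
    Complex.re_sum]
  rw [Finset.sum_comm]
  congr 1; ext i; congr 1; ext j
  simp [RCLike.star_def, Complex.mul_re, ← Complex.normSq_eq_norm_sq,
    Complex.normSq_apply]

lemma hsSq_nonneg {W : ℕ} (M : Mat W) : 0 ≤ hsSq M := by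
  rw [hsSq_eq]; positivity

lemma sqrt_hsSq {W : ℕ} (M : Mat W) : Real.sqrt (hsSq M) = ‖M‖ := by
  rw [hsSq_eq, Real.sqrt_sq (norm_nonneg M)]

lemma hsSq_zero {W : ℕ} : hsSq (0 : Mat W) = 0 := by
  simp [hsSq]

lemma hsSq_one {W : ℕ} : hsSq (1 : Mat W) = W := by
  simp [hsSq]

lemma abs_aux {a b c d e : ℝ} (ha : |a| ≤ 1) (hb : |b| ≤ 1) (hc : |c| ≤ 1)
    (hd : |d| ≤ 1) (he : 0 ≤ e) : |a * b * c * d * e| ≤ e := by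
  rw [abs_mul, abs_mul, abs_mul, abs_mul, abs_of_nonneg he]
  calc |a| * |b| * |c| * |d| * e ≤ 1 * 1 * 1 * 1 * e := by gcongr
    _ = e := by ring

set_option maxHeartbeats 2000000 in
theorem QA_hilbert_schmidt_bound (K : ℝ) (hK : 1 < K) (φ : ℝ → ℝ)
    (hφ : ContDiff ℝ (⊤ : ℕ∞) φ)
    (hφ01 : ∀ x, 0 ≤ x → 0 ≤ φ x ∧ φ x ≤ 1)
    (hlow : ∀ x, 0 ≤ x → Set.indicator (Set.Icc (0:ℝ) K) (fun _ => 1) x ≤ φ x)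
    (hupp : ∀ x, 0 ≤ x → φ x ≤ Set.indicator (Set.Icc (0:ℝ) (2 * K)) (fun _ => 1) x)
    (hderiv : ∀ x, 0 ≤ x →
      |deriv φ x| ≤ Set.indicator (Set.Icc (0:ℝ) (2 * K)) (fun _ => 1) x) :
    ∃ C : ℝ, ∀ W : ℕ, 1 ≤ W → ∀ G Gt : Mat W, G.IsHermitian → Gt.IsHermitian →
    ∀ z : ℝ, |z| ≤ Real.sqrt W → ∀ A : Mat W,
      Real.sqrt (hsSq A) *
        Real.sqrt (hsSq
          (((φ (hsSq G / (W : ℝ) ^ 2) * φ (hsSq Gt / (W : ℝ) ^ 2)) *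
              deriv φ (hsSq A / (W : ℝ)) *
              φ (hsSq (G + (z : ℂ) • 1 + A * Gt * Aᴴ) / (W : ℝ) ^ 2) *
              (2 / (W : ℝ))) • A +
           ((φ (hsSq G / (W : ℝ) ^ 2) * φ (hsSq Gt / (W : ℝ) ^ 2)) *
              φ (hsSq A / (W : ℝ)) *
              deriv φ (hsSq (G + (z : ℂ) • 1 + A * Gt * Aᴴ) / (W : ℝ) ^ 2) *
              (4 / (W : ℝ) ^ 2)) •
            ((G + (z : ℂ) • 1) * A * Gt + A * Gt * Aᴴ * A * Gt))) ≤
      C * W := by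
  have hK0 : (0:ℝ) < K := by linarith
  have h2K0 : (0:ℝ) < 2 * K := by linarith
  -- properties of φ
  have hφab : ∀ x : ℝ, 0 ≤ x → |φ x| ≤ 1 := by
    intro x hx
    obtain ⟨h1, h2⟩ := hφ01 x hx
    rw [abs_le]; constructor <;> linarith
  have hφz : ∀ x : ℝ, 2 * K < x → φ x = 0 := by
    intro x hx
    have hx0 : 0 ≤ x := by linarith
    have h := hupp x hx0
    rw [Set.indicator_of_notMem (by simp [Set.mem_Icc]; intro _; linarith)] at h
    exact le_antisymm h (hφ01 x hx0).1
  have hdab : ∀ x : ℝ, 0 ≤ x → |deriv φ x| ≤ 1 := by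
    intro x hx
    refine (hderiv x hx).trans ?_
    by_cases h : x ∈ Set.Icc (0:ℝ) (2*K)
    · rw [Set.indicator_of_mem h]
    · rw [Set.indicator_of_notMem h]; norm_num
  have hdz : ∀ x : ℝ, 2 * K < x → deriv φ x = 0 := by
    intro x hx
    have hx0 : 0 ≤ x := by linarith
    have h := hderiv x hx0
    rw [Set.indicator_of_notMem (by simp [Set.mem_Icc]; intro _; linarith)] at h
    exact abs_eq_zero.mp (le_antisymm h (abs_nonneg _))
  set s : ℝ := Real.sqrt (2 * K) with hs_def
  have hs0 : 0 ≤ s := Real.sqrt_nonneg _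
  have hss : s * s = 2 * K := Real.mul_self_sqrt h2K0.le
  set C : ℝ := 4 * K + 48 * K ^ 2 + 16 * K * s with hC_def
  have hC4 : 4 * K ≤ C := by rw [hC_def]; nlinarith
  have hC0 : 0 < C := by rw [hC_def]; nlinarith
  refine ⟨C, ?_⟩
  intro W hW G Gt hG hGt z hz A
  have hWpos : (0:ℝ) < W := by exact_mod_cast Nat.lt_of_lt_of_le Nat.zero_lt_one hW
  have hW1 : (1:ℝ) ≤ W := by exact_mod_cast hW
  have hWne : (W:ℝ) ≠ 0 := hWpos.ne'
  have hW2pos : (0:ℝ) < (W:ℝ)^2 := by positivity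
  have hfin0 : (0:ℝ) ≤ C * W := mul_nonneg hC0.le hWpos.le
  have hCW : C ≤ C * W := le_mul_of_one_le_right hC0.le hW1
  set Mz : Mat W := G + (z:ℂ) • 1 + A * Gt * Aᴴ with hMz
  -- Case: γ vanishes
  rcases lt_or_ge (2 * K * (W:ℝ)^2) (hsSq G) with hGbig | hGbd
  · rw [hφz (hsSq G / (W:ℝ)^2) (by rw [lt_div_iff₀ hW2pos]; linarith)]
    simp only [zero_mul, zero_smul, add_zero, zero_add, hsSq_zero, Real.sqrt_zero, mul_zero]
    exact hfin0
  rcases lt_or_ge (2 * K * (W:ℝ)^2) (hsSq Gt) with hGtbig | hGtbd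
  · rw [hφz (hsSq Gt / (W:ℝ)^2) (by rw [lt_div_iff₀ hW2pos]; linarith)]
    simp only [mul_zero, zero_mul, zero_smul, add_zero, zero_add, hsSq_zero, Real.sqrt_zero]
    exact hfin0
  -- Case: cutoff in A vanishes
  rcases lt_or_ge (2 * K * (W:ℝ)) (hsSq A) with hAbig | hAbd
  · rw [hφz (hsSq A / (W:ℝ)) (by rw [lt_div_iff₀ hWpos]; linarith),
      hdz (hsSq A / (W:ℝ)) (by rw [lt_div_iff₀ hWpos]; linarith)]
    simp only [mul_zero, zero_mul, zero_smul, add_zero, zero_add, hsSq_zero, Real.sqrt_zero]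
    exact hfin0
  -- norms
  have haa : ‖A‖ * ‖A‖ ≤ 2 * K * W := by
    have := hsSq_eq A
    nlinarith [hsSq_nonneg A]
  have hc1 : |φ (hsSq G / (W:ℝ)^2) * φ (hsSq Gt / (W:ℝ)^2) *
      deriv φ (hsSq A / (W:ℝ)) * φ (hsSq Mz / (W:ℝ)^2) * (2 / (W:ℝ))| ≤ 2 / (W:ℝ) :=
    abs_aux (hφab _ (div_nonneg (hsSq_nonneg G) hW2pos.le))
      (hφab _ (div_nonneg (hsSq_nonneg Gt) hW2pos.le))
      (hdab _ (div_nonneg (hsSq_nonneg A) hWpos.le))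
      (hφab _ (div_nonneg (hsSq_nonneg Mz) hW2pos.le)) (by positivity)
  have hc2 : |φ (hsSq G / (W:ℝ)^2) * φ (hsSq Gt / (W:ℝ)^2) *
      φ (hsSq A / (W:ℝ)) * deriv φ (hsSq Mz / (W:ℝ)^2) * (4 / (W:ℝ)^2)| ≤ 4 / (W:ℝ)^2 :=
    abs_aux (hφab _ (div_nonneg (hsSq_nonneg G) hW2pos.le))
      (hφab _ (div_nonneg (hsSq_nonneg Gt) hW2pos.le))
      (hφab _ (div_nonneg (hsSq_nonneg A) hWpos.le))
      (hdab _ (div_nonneg (hsSq_nonneg Mz) hW2pos.le)) (by positivity)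
  rw [sqrt_hsSq, sqrt_hsSq]
  rcases lt_or_ge (2 * K * (W:ℝ)^2) (hsSq Mz) with hMbig | hMbd
  · -- second cutoff derivative vanishes
    rw [hdz (hsSq Mz / (W:ℝ)^2) (by rw [lt_div_iff₀ hW2pos]; linarith),
      show φ (hsSq G / (W:ℝ)^2) * φ (hsSq Gt / (W:ℝ)^2) * φ (hsSq A / (W:ℝ)) * 0 *
        (4 / (W:ℝ)^2) = 0 by ring, zero_smul, add_zero, norm_smul, Real.norm_eq_abs]
    refine le_trans (mul_le_mul_of_nonneg_left
      (mul_le_mul_of_nonneg_right hc1 (norm_nonneg _)) (norm_nonneg _)) ?_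
    have step : ‖A‖ * (2 / (W:ℝ) * ‖A‖) = (‖A‖ * ‖A‖) * (2 / (W:ℝ)) := by ring
    rw [step]
    have step2 : (‖A‖ * ‖A‖) * (2 / (W:ℝ)) ≤ (2*K*(W:ℝ)) * (2 / (W:ℝ)) :=
      mul_le_mul_of_nonneg_right haa (by positivity)
    have step3 : (2*K*(W:ℝ)) * (2 / (W:ℝ)) = 4*K := by field_simp; ring
    exact le_trans (step2.trans step3.le) (hC4.trans hCW)
  -- main case: all cutoffs may be active
  have hGn : ‖G‖ ≤ s * W := by
    rw [← sqrt_hsSq]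
    calc Real.sqrt (hsSq G) ≤ Real.sqrt (2*K*(W:ℝ)^2) := Real.sqrt_le_sqrt hGbd
      _ = s * W := by rw [Real.sqrt_mul h2K0.le, Real.sqrt_sq hWpos.le]
  have hGtn : ‖Gt‖ ≤ s * W := by
    rw [← sqrt_hsSq]
    calc Real.sqrt (hsSq Gt) ≤ Real.sqrt (2*K*(W:ℝ)^2) := Real.sqrt_le_sqrt hGtbd
      _ = s * W := by rw [Real.sqrt_mul h2K0.le, Real.sqrt_sq hWpos.le]
  have hMn : ‖Mz‖ ≤ s * W := by
    rw [← sqrt_hsSq]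
    calc Real.sqrt (hsSq Mz) ≤ Real.sqrt (2*K*(W:ℝ)^2) := Real.sqrt_le_sqrt hMbd
      _ = s * W := by rw [Real.sqrt_mul h2K0.le, Real.sqrt_sq hWpos.le]
  have hz1 : ‖((z:ℂ) • (1 : Mat W))‖ ≤ (W:ℝ) := by
    rw [norm_smul, Complex.norm_real, Real.norm_eq_abs]
    have h1 : ‖(1 : Mat W)‖ = Real.sqrt W := by rw [← sqrt_hsSq, hsSq_one]
    rw [h1]
    calc |z| * Real.sqrt W ≤ Real.sqrt W * Real.sqrt W :=
          mul_le_mul_of_nonneg_right hz (Real.sqrt_nonneg _)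
      _ = W := Real.mul_self_sqrt (Nat.cast_nonneg W)
  have hGz : ‖G + (z:ℂ) • (1 : Mat W)‖ ≤ s * W + W :=
    le_trans (norm_add_le _ _) (by linarith)
  have hXn : ‖A * Gt * Aᴴ‖ ≤ 2*(s*W) + W := by
    have e : A * Gt * Aᴴ = Mz - (G + (z:ℂ) • 1) := by rw [hMz]; abel
    rw [e]
    calc ‖Mz - (G + (z:ℂ) • (1 : Mat W))‖ ≤ ‖Mz‖ + ‖G + (z:ℂ) • (1 : Mat W)‖ := norm_sub_le _ _
      _ ≤ (s*W) + (s*W + W) := add_le_add hMn hGz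
      _ = 2*(s*W) + W := by ring
  have hsW0 : (0:ℝ) ≤ s * W := mul_nonneg hs0 hWpos.le
  have hB : ‖(G + (z:ℂ) • 1) * A * Gt + A * Gt * Aᴴ * A * Gt‖ ≤
      (3*s + 2) * s * (W:ℝ)^2 * ‖A‖ := by
    have t1 : ‖(G + (z:ℂ) • 1) * A * Gt‖ ≤ (s*W + W) * ‖A‖ * (s*W) := by
      refine le_trans (norm_mul_le _ _) ?_
      refine mul_le_mul (le_trans (norm_mul_le _ _)
        (mul_le_mul_of_nonneg_right hGz (norm_nonneg _))) hGtn (norm_nonneg _) ?_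
      exact mul_nonneg (by linarith) (norm_nonneg _)
    have t2 : ‖A * Gt * Aᴴ * A * Gt‖ ≤ (2*(s*W) + W) * ‖A‖ * (s*W) := by
      refine le_trans (norm_mul_le _ _) ?_
      refine mul_le_mul (le_trans (norm_mul_le _ _)
        (mul_le_mul_of_nonneg_right hXn (norm_nonneg _))) hGtn (norm_nonneg _) ?_
      exact mul_nonneg (by linarith) (norm_nonneg _)
    calc ‖(G + (z:ℂ) • 1) * A * Gt + A * Gt * Aᴴ * A * Gt‖
        ≤ ‖(G + (z:ℂ) • 1) * A * Gt‖ + ‖A * Gt * Aᴴ * A * Gt‖ := norm_add_le _ _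
      _ ≤ (s*W + W) * ‖A‖ * (s*W) + (2*(s*W) + W) * ‖A‖ * (s*W) := add_le_add t1 t2
      _ = (3*s + 2) * s * (W:ℝ)^2 * ‖A‖ := by ring
  have hQ2 : ‖(φ (hsSq G / (W:ℝ)^2) * φ (hsSq Gt / (W:ℝ)^2) *
        deriv φ (hsSq A / (W:ℝ)) * φ (hsSq Mz / (W:ℝ)^2) * (2 / (W:ℝ))) • A +
      (φ (hsSq G / (W:ℝ)^2) * φ (hsSq Gt / (W:ℝ)^2) * φ (hsSq A / (W:ℝ)) *
        deriv φ (hsSq Mz / (W:ℝ)^2) * (4 / (W:ℝ)^2)) •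
        ((G + (z:ℂ) • 1) * A * Gt + A * Gt * Aᴴ * A * Gt)‖ ≤
      2 / (W:ℝ) * ‖A‖ + 4*(3*s+2)*s*‖A‖ := by
    refine le_trans (norm_add_le _ _) ?_
    rw [norm_smul, norm_smul, Real.norm_eq_abs, Real.norm_eq_abs]
    have u1 : |φ (hsSq G / (W:ℝ)^2) * φ (hsSq Gt / (W:ℝ)^2) *
        deriv φ (hsSq A / (W:ℝ)) * φ (hsSq Mz / (W:ℝ)^2) * (2 / (W:ℝ))| * ‖A‖ ≤
        2 / (W:ℝ) * ‖A‖ := mul_le_mul_of_nonneg_right hc1 (norm_nonneg _)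
    have u2 : |φ (hsSq G / (W:ℝ)^2) * φ (hsSq Gt / (W:ℝ)^2) * φ (hsSq A / (W:ℝ)) *
        deriv φ (hsSq Mz / (W:ℝ)^2) * (4 / (W:ℝ)^2)| *
        ‖(G + (z:ℂ) • 1) * A * Gt + A * Gt * Aᴴ * A * Gt‖ ≤
        (4 / (W:ℝ)^2) * ((3*s + 2) * s * (W:ℝ)^2 * ‖A‖) :=
      mul_le_mul hc2 hB (norm_nonneg _) (by positivity)
    have u3 : (4 / (W:ℝ)^2) * ((3*s + 2) * s * (W:ℝ)^2 * ‖A‖) = 4*(3*s+2)*s*‖A‖ := by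
      field_simp
    rw [u3] at u2
    linarith
  refine le_trans (mul_le_mul_of_nonneg_left hQ2 (norm_nonneg _)) ?_
  have e1 : ‖A‖ * (2 / (W:ℝ) * ‖A‖ + 4*(3*s+2)*s*‖A‖) =
      (‖A‖*‖A‖) * (2 / (W:ℝ)) + 4*(3*s+2)*s*(‖A‖*‖A‖) := by ring
  rw [e1]
  have e2 : (‖A‖*‖A‖) * (2 / (W:ℝ)) ≤ (2*K*(W:ℝ)) * (2 / (W:ℝ)) :=
    mul_le_mul_of_nonneg_right haa (by positivity)
  have e3 : (2*K*(W:ℝ)) * (2 / (W:ℝ)) = 4*K := by field_simp; ring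
  have e4 : 4*(3*s+2)*s*(‖A‖*‖A‖) ≤ 4*(3*s+2)*s*(2*K*(W:ℝ)) := by
    refine mul_le_mul_of_nonneg_left haa ?_
    nlinarith
  have e5 : 4*(3*s+2)*s*(2*K*(W:ℝ)) = (24*K*(s*s) + 16*K*s) * W := by ring
  rw [e5, hss] at e4
  rw [hC_def]
  nlinarith

end RBM
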